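/- Let η : [0,1] → ℝ be measurable and bounded with ‖η‖_∞ ≤ M, and define the normalized density f_η(u) = exp(η(u)) / ∫₀¹ exp(η(t)) dt. Then for any two such functions η, η', ‖f_η - f_{η'}‖_{L^∞([0,1])} ≤ C(M) ‖η - η'‖_{L^∞([0,1])}, where C(M) is a constant depending only on M (one may take C(M) = 2e^{4M}). -/

import Mathlib

open MeasureTheory Set

private lemma exp_diff_le {M a b : ℝ} (ha : |a| ≤ M) (hb : |b| ≤ M) :
    |Real.exp a - Real.exp b| ≤ Real.exp M * |a - b| := by
  have key : ∀ x y : ℝ, |x| ≤ M → |y| ≤ M → y ≤ x →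
      Real.exp x - Real.exp y ≤ Real.exp M * |x - y| := by
    intro x y hx hy hxy
    have h1 : y - x + 1 ≤ Real.exp (y - x) := Real.add_one_le_exp _
    have h2 : Real.exp (y - x) * Real.exp x = Real.exp y := by
      rw [← Real.exp_add]; ring_nf
    have h3 : Real.exp x ≤ Real.exp M := Real.exp_le_exp.mpr (abs_le.mp hx).2
    have h4 : (0:ℝ) < Real.exp x := Real.exp_pos x
    have h5 : |x - y| = x - y := abs_of_nonneg (by linarith)
    nlinarith
  rcases le_total a b with h | h
  · rw [abs_sub_comm, abs_sub_comm a b]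
    rw [abs_of_nonneg (by linarith [Real.exp_le_exp.mpr h] : (0:ℝ) ≤ Real.exp b - Real.exp a)]
    exact key b a hb ha h
  · rw [abs_of_nonneg (by linarith [Real.exp_le_exp.mpr h] : (0:ℝ) ≤ Real.exp a - Real.exp b)]
    exact key a b ha hb h

private lemma int_bounds {M : ℝ} (η : ℝ → ℝ) (hm : Measurable η)
    (hb : ∀ u ∈ Icc (0:ℝ) 1, |η u| ≤ M) :
    IntegrableOn (fun t => Real.exp (η t)) (Icc (0:ℝ) 1) ∧
    Real.exp (-M) ≤ (∫ t in Icc (0:ℝ) 1, Real.exp (η t)) ∧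
    (∫ t in Icc (0:ℝ) 1, Real.exp (η t)) ≤ Real.exp M := by
  have hmeas : (volume (Icc (0:ℝ) 1)) = 1 := by simp
  have hint : IntegrableOn (fun t => Real.exp (η t)) (Icc (0:ℝ) 1) := by
    apply Integrable.mono' (integrable_const (Real.exp M))
    · exact (Real.measurable_exp.comp hm).aestronglyMeasurable
    · filter_upwards [ae_restrict_mem measurableSet_Icc] with t ht
      rw [Real.norm_eq_abs, abs_of_pos (Real.exp_pos _)]
      exact Real.exp_le_exp.mpr (abs_le.mp (hb t ht)).2
  refine ⟨hint, ?_, ?_⟩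
  · calc Real.exp (-M) = ∫ t in Icc (0:ℝ) 1, Real.exp (-M) := by
          rw [setIntegral_const]; simp [hmeas]
      _ ≤ _ := by
          apply setIntegral_mono_on (integrable_const _) hint measurableSet_Icc
          intro t ht
          exact Real.exp_le_exp.mpr (by linarith [(abs_le.mp (hb t ht)).1])
  · calc (∫ t in Icc (0:ℝ) 1, Real.exp (η t)) ≤ ∫ t in Icc (0:ℝ) 1, Real.exp M := by
          apply setIntegral_mono_on hint (integrable_const _) measurableSet_Icc
          intro t ht
          exact Real.exp_le_exp.mpr (abs_le.mp (hb t ht)).2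
      _ = Real.exp M := by rw [setIntegral_const]; simp [hmeas]

theorem stmt7 (M δ : ℝ) (hM : 0 ≤ M) (η η' : ℝ → ℝ)
    (hηm : Measurable η) (hη'm : Measurable η')
    (hηb : ∀ u ∈ Icc (0:ℝ) 1, |η u| ≤ M) (hη'b : ∀ u ∈ Icc (0:ℝ) 1, |η' u| ≤ M)
    (hδ : ∀ u ∈ Icc (0:ℝ) 1, |η u - η' u| ≤ δ) :
    ∀ u ∈ Icc (0:ℝ) 1,
      |Real.exp (η u) / (∫ t in Icc (0:ℝ) 1, Real.exp (η t))
        - Real.exp (η' u) / (∫ t in Icc (0:ℝ) 1, Real.exp (η' t))|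
      ≤ 2 * Real.exp (4 * M) * δ := by
  obtain ⟨hintA, hAlo, hAhi⟩ := int_bounds η hηm hηb
  obtain ⟨hintB, hBlo, hBhi⟩ := int_bounds η' hη'm hη'b
  set A := ∫ t in Icc (0:ℝ) 1, Real.exp (η t) with hA
  set B := ∫ t in Icc (0:ℝ) 1, Real.exp (η' t) with hB
  have hδ0 : 0 ≤ δ := le_trans (abs_nonneg _) (hδ 0 (by norm_num))
  have hApos : 0 < A := lt_of_lt_of_le (Real.exp_pos _) hAlo
  have hBpos : 0 < B := lt_of_lt_of_le (Real.exp_pos _) hBlo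
  -- |B - A| ≤ exp M * δ
  have hAB : |B - A| ≤ Real.exp M * δ := by
    have : B - A = ∫ t in Icc (0:ℝ) 1, (Real.exp (η' t) - Real.exp (η t)) := by
      rw [integral_sub hintB hintA]
    rw [this, ← Real.norm_eq_abs]
    have := norm_setIntegral_le_of_norm_le_const (μ := volume) (s := Icc (0:ℝ) 1)
      (C := Real.exp M * δ) (by simp)
      (f := fun t => Real.exp (η' t) - Real.exp (η t)) ?_
    · simpa using this
    · intro t ht
      rw [Real.norm_eq_abs, abs_sub_comm]
      calc |Real.exp (η t) - Real.exp (η' t)| ≤ Real.exp M * |η t - η' t| :=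
            exp_diff_le (hηb t ht) (hη'b t ht)
        _ ≤ Real.exp M * δ := by
            exact mul_le_mul_of_nonneg_left (hδ t ht) (Real.exp_pos M).le
  intro u hu
  set ea := Real.exp (η u)
  set eb := Real.exp (η' u)
  have heab : |ea - eb| ≤ Real.exp M * δ := by
    calc |ea - eb| ≤ Real.exp M * |η u - η' u| := exp_diff_le (hηb u hu) (hη'b u hu)
      _ ≤ Real.exp M * δ := mul_le_mul_of_nonneg_left (hδ u hu) (Real.exp_pos M).le
  have hebM : eb ≤ Real.exp M := Real.exp_le_exp.mpr (abs_le.mp (hη'b u hu)).2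
  have hebpos : 0 < eb := Real.exp_pos _
  have hrw : ea / A - eb / B = ((ea - eb) * B + eb * (B - A)) / (A * B) := by
    field_simp; ring
  rw [hrw]
  rw [abs_div, abs_of_pos (mul_pos hApos hBpos)]
  have hnum : |(ea - eb) * B + eb * (B - A)| ≤ 2 * Real.exp (2 * M) * δ := by
    calc |(ea - eb) * B + eb * (B - A)| ≤ |(ea - eb) * B| + |eb * (B - A)| := abs_add_le _ _
      _ = |ea - eb| * B + eb * |B - A| := by
          rw [abs_mul, abs_mul, abs_of_pos hBpos, abs_of_pos hebpos]
      _ ≤ (Real.exp M * δ) * Real.exp M + Real.exp M * (Real.exp M * δ) := by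
          gcongr
      _ = 2 * Real.exp (2 * M) * δ := by
          rw [show (2:ℝ) * M = M + M by ring, Real.exp_add]; ring
  have hden : Real.exp (-(2*M)) ≤ A * B := by
    rw [show -(2*M) = -M + -M by ring, Real.exp_add]
    exact mul_le_mul hAlo hBlo (Real.exp_pos _).le hApos.le
  calc |(ea - eb) * B + eb * (B - A)| / (A * B)
      ≤ (2 * Real.exp (2 * M) * δ) / Real.exp (-(2*M)) := by
        exact div_le_div₀ (by positivity) hnum (Real.exp_pos _) hden
    _ = 2 * Real.exp (4 * M) * δ := by
        rw [div_eq_mul_inv, ← Real.exp_neg, neg_neg, show (4:ℝ)*M = 2*M + 2*M by ring,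
          Real.exp_add]
        ring
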